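/- Let N ≥ 1 and let f₁,…,f_N : ℝ → ℝ be functions, each equal on all of ℝ to its Taylor series at 0, with all Taylor coefficients f_k^{(m)}(0)/m! strictly positive. For 1 ≤ k ≤ N−1 and l,m ∈ ℕ set φ_k(l,m) := (d^m/dt^m)|_{t=0} (f_k(t))^l / m!. Then g := f_N ∘ ⋯ ∘ f₁ is equal on all of ℝ to its Taylor series at 0, and for every t ∈ ℝ, g(t) = ∑_{l₁,…,l_N ≥ 0} (f_N^{(l_N)}(0)/l_N!) · φ_{N−1}(l_N, l_{N−1}) ⋯ φ₁(l₂, l₁) · t^{l₁} (the multiple series converging absolutely); moreover every Taylor coefficient g^{(m)}(0)/m! is strictly positive. -/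

import Mathlib

open scoped BigOperators

/-- Composition `f (N-1) ∘ ⋯ ∘ f 0` (so with 1-based indexing, `f_N ∘ ⋯ ∘ f₁`). -/
def compUpTo (f : ℕ → ℝ → ℝ) : ℕ → ℝ → ℝ
  | 0 => id
  | (k + 1) => f k ∘ compUpTo f k

/-- Extend a tuple `l : Fin N → ℕ` to `ℕ → ℕ` by zero. -/
def extendTuple (N : ℕ) (l : Fin N → ℕ) : ℕ → ℕ :=
  fun i => if h : i < N then l ⟨i, h⟩ else 0

namespace Stmt0Aux


lemma cauchyMul {b d : ℕ → ℝ} {h g : ℝ → ℝ}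
    (hb : ∀ x : ℝ, HasSum (fun m => b m * x ^ m) (h x))
    (hd : ∀ x : ℝ, HasSum (fun m => d m * x ^ m) (g x)) (x : ℝ) :
    HasSum (fun m => (∑ i ∈ Finset.range (m + 1), b i * d (m - i)) * x ^ m) (h x * g x) := by
  have hu : Summable fun m => ‖b m * x ^ m‖ := by
    simpa only [Real.norm_eq_abs] using summable_abs_iff.mpr (hb x).summable
  have hv : Summable fun m => ‖d m * x ^ m‖ := by
    simpa only [Real.norm_eq_abs] using summable_abs_iff.mpr (hd x).summable
  have key : ∀ n, (∑ k ∈ Finset.range (n + 1), (b k * x ^ k) * (d (n - k) * x ^ (n - k)))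
      = (∑ i ∈ Finset.range (n + 1), b i * d (n - i)) * x ^ n := by
    intro n
    rw [Finset.sum_mul]
    refine Finset.sum_congr rfl fun k hk => ?_
    have hk' : k ≤ n := Nat.lt_succ_iff.mp (Finset.mem_range.mp hk)
    have hx : x ^ k * x ^ (n - k) = x ^ n := by
      rw [← pow_add, Nat.add_sub_cancel' hk']
    calc b k * x ^ k * (d (n - k) * x ^ (n - k))
        = b k * d (n - k) * (x ^ k * x ^ (n - k)) := by ring
      _ = b k * d (n - k) * x ^ n := by rw [hx]
  have hS : Summable fun n => (∑ i ∈ Finset.range (n + 1), b i * d (n - i)) * x ^ n := by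
    have := (summable_norm_sum_mul_range_of_summable_norm hu hv).of_norm
    exact this.congr key
  have ht : h x * g x = ∑' n, (∑ i ∈ Finset.range (n + 1), b i * d (n - i)) * x ^ n := by
    rw [← (hb x).tsum_eq, ← (hd x).tsum_eq,
      tsum_mul_tsum_eq_tsum_sum_range_of_summable_norm hu hv]
    exact tsum_congr key
  exact ht ▸ hS.hasSum

def powCoeff (b : ℕ → ℝ) : ℕ → ℕ → ℝ
  | 0 => fun m => if m = 0 then 1 else 0
  | (l + 1) => fun m => ∑ i ∈ Finset.range (m + 1), b i * powCoeff b l (m - i)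

lemma powCoeff_nonneg {b : ℕ → ℝ} (hb : ∀ m, 0 ≤ b m) : ∀ l m, 0 ≤ powCoeff b l m
  | 0, m => by unfold powCoeff; split <;> norm_num
  | (l + 1), m => Finset.sum_nonneg fun i _ =>
      mul_nonneg (hb i) (powCoeff_nonneg hb l _)

lemma powCoeff_one {b : ℕ → ℝ} (m : ℕ) : powCoeff b 1 m = b m := by
  show (∑ i ∈ Finset.range (m + 1), b i * powCoeff b 0 (m - i)) = b m
  rw [Finset.sum_eq_single m]
  · simp [powCoeff]
  · intro i hi hne
    have : m - i ≠ 0 := by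
      have := Nat.lt_succ_iff.mp (Finset.mem_range.mp hi)
      omega
    simp [powCoeff, this]
  · intro h; exact absurd (Finset.self_mem_range_succ m) h

lemma powCoeff_hasSum {b : ℕ → ℝ} {h : ℝ → ℝ}
    (hb : ∀ x : ℝ, HasSum (fun m => b m * x ^ m) (h x)) :
    ∀ l, ∀ x : ℝ, HasSum (fun m => powCoeff b l m * x ^ m) (h x ^ l)
  | 0, x => by
    have h1 : HasSum (fun m : ℕ => if m = 0 then (1 : ℝ) else 0) 1 := hasSum_ite_eq 0 1
    have h2 : (fun m : ℕ => powCoeff b 0 m * x ^ m)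
        = fun m : ℕ => if m = 0 then (1 : ℝ) else 0 := by
      funext m
      rcases Nat.eq_zero_or_pos m with rfl | hm
      · simp [powCoeff]
      · simp [powCoeff, Nat.pos_iff_ne_zero.mp hm]
    rw [h2, pow_zero]
    exact h1
  | (l + 1), x => by
    have := cauchyMul hb (powCoeff_hasSum hb l) x
    rw [← pow_succ'] at this
    simpa [powCoeff] using this


lemma taylorCoeff {c : ℕ → ℝ} {F : ℝ → ℝ}
    (hc : ∀ x : ℝ, HasSum (fun m => c m * x ^ m) (F x)) (m : ℕ) :
    iteratedDeriv m F 0 = (Nat.factorial m : ℝ) * c m := by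
  set p := FormalMultilinearSeries.ofScalars ℝ c with hp
  have hrad : p.radius = ⊤ := by
    refine ENNReal.eq_top_of_forall_nnreal_le fun r => ?_
    apply p.le_radius_of_summable
    have hs : Summable fun n => |c n * (r : ℝ) ^ n| :=
      summable_abs_iff.mpr (hc r).summable
    refine hs.congr fun n => ?_
    rw [abs_mul, abs_pow, abs_of_nonneg r.coe_nonneg,
      FormalMultilinearSeries.ofScalars_norm, Real.norm_eq_abs]
  have hball : HasFPowerSeriesOnBall F p 0 ⊤ := by
    refine ⟨hrad.ge, by simp, fun {y} _ => ?_⟩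
    have := hc y
    simp only [hp, FormalMultilinearSeries.ofScalars_apply_eq, smul_eq_mul, zero_add]
    exact this
  have hfac := hball.factorial_smul (1 : ℝ) m
  rw [iteratedDeriv, ← hfac, hp, FormalMultilinearSeries.ofScalars_apply_eq]
  simp [mul_comm]

/-- Summability of the double family `(l, m) ↦ ca l * powCoeff b l m * x ^ m`. -/
lemma compSummable {ca b : ℕ → ℝ} {G h : ℝ → ℝ}
    (hca : ∀ x : ℝ, HasSum (fun m => ca m * x ^ m) (G x)) (hcann : ∀ m, 0 ≤ ca m)
    (hb : ∀ x : ℝ, HasSum (fun m => b m * x ^ m) (h x)) (hbnn : ∀ m, 0 ≤ b m)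
    (x : ℝ) :
    Summable (fun p : ℕ × ℕ => ca p.1 * powCoeff b p.1 p.2 * x ^ p.2) := by
  have key : ∀ y : ℝ, 0 ≤ y →
      Summable (fun p : ℕ × ℕ => ca p.1 * powCoeff b p.1 p.2 * y ^ p.2) := by
    intro y hy
    have hnn : 0 ≤ fun p : ℕ × ℕ => ca p.1 * powCoeff b p.1 p.2 * y ^ p.2 := by
      intro p
      exact mul_nonneg (mul_nonneg (hcann p.1) (powCoeff_nonneg hbnn p.1 p.2))
        (pow_nonneg hy p.2)
    have fib : ∀ l, HasSum (fun m => ca l * powCoeff b l m * y ^ m) (ca l * h y ^ l) :=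
      fun l => by simpa [mul_assoc] using (powCoeff_hasSum hb l y).mul_left (ca l)
    refine (summable_prod_of_nonneg hnn).mpr ⟨fun l => (fib l).summable, ?_⟩
    exact ((hca (h y)).summable).congr fun l => ((fib l).tsum_eq).symm
  rcases le_or_gt 0 x with hx | hx
  · exact key x hx
  · refine summable_abs_iff.mp ?_
    refine (key |x| (abs_nonneg x)).congr fun p => ?_
    rw [abs_mul, abs_mul, abs_pow, abs_of_nonneg (hcann p.1),
      abs_of_nonneg (powCoeff_nonneg hbnn p.1 p.2)]

/-- Composition: coefficients of `G ∘ h`. -/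
lemma compCoeff {ca b : ℕ → ℝ} {G h : ℝ → ℝ}
    (hca : ∀ x : ℝ, HasSum (fun m => ca m * x ^ m) (G x)) (hcapos : ∀ m, 0 < ca m)
    (hb : ∀ x : ℝ, HasSum (fun m => b m * x ^ m) (h x)) (hbpos : ∀ m, 0 < b m) :
    ∃ C : ℕ → ℝ, (∀ m, 0 < C m) ∧
      ∀ x : ℝ, HasSum (fun m => C m * x ^ m) (G (h x)) := by
  have hcann : ∀ m, 0 ≤ ca m := fun m => (hcapos m).le
  have hbnn : ∀ m, 0 ≤ b m := fun m => (hbpos m).le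
  -- summability of coefficient columns, from x = 1
  have hcol : ∀ m, Summable (fun l => ca l * powCoeff b l m) := by
    intro m
    have h1 := compSummable hca hcann hb hbnn 1
    have hinj : Function.Injective (fun l : ℕ => ((l, m) : ℕ × ℕ)) := fun l l' hll' =>
      congrArg Prod.fst hll'
    have := h1.comp_injective hinj
    simpa [Function.comp_def] using this
  refine ⟨fun m => ∑' l, ca l * powCoeff b l m, fun m => ?_, fun x => ?_⟩
  · have hterm : ca 1 * powCoeff b 1 m ≤ ∑' l, ca l * powCoeff b l m := by
      refine Summable.le_tsum (hcol m) 1 fun l _ => ?_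
      exact mul_nonneg (hcann l) (powCoeff_nonneg hbnn l m)
    have : 0 < ca 1 * powCoeff b 1 m := by
      rw [powCoeff_one]; exact mul_pos (hcapos 1) (hbpos m)
    exact lt_of_lt_of_le this hterm
  · -- double sum rearrangement
    have hsum := compSummable hca hcann hb hbnn x
    have hswap : Summable (fun p : ℕ × ℕ => ca p.2 * powCoeff b p.2 p.1 * x ^ p.1) :=
      (Equiv.prodComm ℕ ℕ).summable_iff.mpr hsum
    have fibm : ∀ m, HasSum (fun l => ca l * powCoeff b l m * x ^ m)
        ((∑' l, ca l * powCoeff b l m) * x ^ m) := fun m =>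
      ((hcol m).hasSum.mul_right (x ^ m))
    have h2 : HasSum (fun m => (∑' l, ca l * powCoeff b l m) * x ^ m)
        (∑' p : ℕ × ℕ, ca p.2 * powCoeff b p.2 p.1 * x ^ p.1) :=
      hswap.hasSum.prod_fiberwise fun m => fibm m
    have fibl : ∀ l, HasSum (fun m => ca l * powCoeff b l m * x ^ m) (ca l * h x ^ l) :=
      fun l => by simpa [mul_assoc] using (powCoeff_hasSum hb l x).mul_left (ca l)
    have h3 : HasSum (fun l => ca l * h x ^ l)
        (∑' p : ℕ × ℕ, ca p.1 * powCoeff b p.1 p.2 * x ^ p.2) :=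
      hsum.hasSum.prod_fiberwise fun l => fibl l
    have h4 : (∑' p : ℕ × ℕ, ca p.1 * powCoeff b p.1 p.2 * x ^ p.2) = G (h x) :=
      h3.unique (hca (h x))
    have h5 : (∑' p : ℕ × ℕ, ca p.2 * powCoeff b p.2 p.1 * x ^ p.1)
        = (∑' p : ℕ × ℕ, ca p.1 * powCoeff b p.1 p.2 * x ^ p.2) :=
      (Equiv.prodComm ℕ ℕ).tsum_eq (fun p : ℕ × ℕ => ca p.1 * powCoeff b p.1 p.2 * x ^ p.2)
    rw [h5, h4] at h2
    exact h2

lemma extendTuple_lt {N : ℕ} (l : Fin N → ℕ) (i : ℕ) (h : i < N) :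
    extendTuple N l i = l ⟨i, h⟩ := dif_pos h

lemma extendTuple_snoc_lt {M : ℕ} (l' : Fin (M + 1) → ℕ) (m : ℕ) (k : ℕ) (h : k < M + 1) :
    extendTuple (M + 2) (Fin.snoc l' m) k = extendTuple (M + 1) l' k := by
  rw [extendTuple_lt _ _ (h.trans (Nat.lt_succ_self _)), extendTuple_lt _ _ h]
  have : (⟨k, h.trans (Nat.lt_succ_self _)⟩ : Fin (M + 2)) = Fin.castSucc ⟨k, h⟩ := rfl
  rw [this, Fin.snoc_castSucc]

lemma extendTuple_snoc_last {M : ℕ} (l' : Fin (M + 1) → ℕ) (m : ℕ) :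
    extendTuple (M + 2) (Fin.snoc l' m) (M + 1) = m := by
  rw [extendTuple_lt _ _ (Nat.lt_succ_self _)]
  have : (⟨M + 1, Nat.lt_succ_self _⟩ : Fin (M + 2)) = Fin.last (M + 1) := rfl
  rw [this, Fin.snoc_last]

lemma multiSum (f : ℕ → ℝ → ℝ) (a : ℕ → ℕ → ℝ) (φ : ℕ → ℕ → ℕ → ℝ) :
    ∀ M : ℕ,
    (∀ k < M, ∀ m, 0 < a k m) →
    (∀ k < M, ∀ x : ℝ, HasSum (fun m => a k m * x ^ m) (f k x)) →
    (∀ k < M, ∀ l m, φ k l m = powCoeff (a k) l m) →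
    ∀ (w : ℕ → ℝ) (W : ℝ → ℝ), (∀ m, 0 ≤ w m) →
    (∀ y : ℝ, HasSum (fun m => w m * y ^ m) (W y)) →
    ∀ t : ℝ, HasSum (fun l : Fin (M + 1) → ℕ =>
        w (extendTuple (M + 1) l M) *
        (∏ k ∈ Finset.range M, φ k (extendTuple (M + 1) l (k + 1)) (extendTuple (M + 1) l k)) *
        t ^ (extendTuple (M + 1) l 0)) (W (compUpTo f M t)) := by
  intro M
  induction M with
  | zero =>
    intro _ _ _ w W hwnn hW t
    set e : ℕ ≃ (Fin 1 → ℕ) := (Equiv.funUnique (Fin 1) ℕ).symm with he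
    refine e.hasSum_iff.mp ?_
    show HasSum _ (W (compUpTo f 0 t))
    have hct : compUpTo f 0 t = t := rfl
    rw [hct]
    refine (hW t).congr_fun fun m => ?_
    have h0 : extendTuple 1 (e m) 0 = m := by
      rw [extendTuple_lt (e m) 0 Nat.one_pos, he]
      rfl
    simp [Function.comp, h0]
  | succ M ih =>
    intro ha hf hφ w W hwnn hW t
    have haM : ∀ m, 0 < a M m := ha M (Nat.lt_succ_self M)
    have hfM : ∀ x : ℝ, HasSum (fun m => a M m * x ^ m) (f M x) := hf M (Nat.lt_succ_self M)
    have hφM : ∀ l m, φ M l m = powCoeff (a M) l m := hφ M (Nat.lt_succ_self M)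
    have ha' : ∀ k < M, ∀ m, 0 < a k m := fun k hk => ha k (hk.trans (Nat.lt_succ_self M))
    have hf' : ∀ k < M, ∀ x : ℝ, HasSum (fun m => a k m * x ^ m) (f k x) :=
      fun k hk => hf k (hk.trans (Nat.lt_succ_self M))
    have hφ' : ∀ k < M, ∀ l m, φ k l m = powCoeff (a k) l m :=
      fun k hk => hφ k (hk.trans (Nat.lt_succ_self M))
    have hφMnn : ∀ j m, 0 ≤ φ M j m := fun j m => by
      rw [hφM]; exact powCoeff_nonneg (fun m' => (haM m').le) j m
    have hpow : ∀ j (y : ℝ), HasSum (fun m' => φ M j m' * y ^ m') ((f M y) ^ j) := by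
      intro j y
      have := powCoeff_hasSum hfM j y
      refine this.congr_fun fun m' => by rw [hφM]
    -- the product-indexed family
    set F : ℝ → ℕ × (Fin (M + 1) → ℕ) → ℝ := fun s p =>
      w p.1 * (φ M p.1 (extendTuple (M + 1) p.2 M) *
        (∏ k ∈ Finset.range M,
          φ k (extendTuple (M + 1) p.2 (k + 1)) (extendTuple (M + 1) p.2 k)) *
        s ^ (extendTuple (M + 1) p.2 0)) with hF
    have fib : ∀ (s : ℝ) (m : ℕ), HasSum (fun l' => F s (m, l'))
        (w m * (compUpTo f (M + 1) s) ^ m) := by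
      intro s m
      have hinner := ih ha' hf' hφ' (φ M m) (fun y => (f M y) ^ m) (hφMnn m) (hpow m) s
      have : compUpTo f (M + 1) s = f M (compUpTo f M s) := rfl
      rw [this]
      exact hinner.mul_left (w m)
    have outer : ∀ s : ℝ, HasSum (fun m => w m * (compUpTo f (M + 1) s) ^ m)
        (W (compUpTo f (M + 1) s)) := fun s => hW _
    -- nonneg of per-tuple factor
    have hprodnn : ∀ (l' : Fin (M + 1) → ℕ),
        0 ≤ ∏ k ∈ Finset.range M,
          φ k (extendTuple (M + 1) l' (k + 1)) (extendTuple (M + 1) l' k) := by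
      intro l'
      refine Finset.prod_nonneg fun k hk => ?_
      have hk' : k < M := Finset.mem_range.mp hk
      rw [hφ' k hk']
      exact powCoeff_nonneg (fun m' => (ha' k hk' m').le) _ _
    have hsum : ∀ s : ℝ, Summable (F s) := by
      have key : ∀ s : ℝ, 0 ≤ s → Summable (F s) := by
        intro s hs
        have hnn : 0 ≤ F s := by
          intro p
          exact mul_nonneg (hwnn p.1) (mul_nonneg (mul_nonneg (hφMnn _ _) (hprodnn _))
            (pow_nonneg hs _))
        refine (summable_prod_of_nonneg hnn).mpr ⟨fun m => (fib s m).summable, ?_⟩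
        exact (outer s).summable.congr fun m => ((fib s m).tsum_eq).symm
      intro s
      rcases le_or_gt 0 s with hs | hs
      · exact key s hs
      · refine summable_abs_iff.mp ((key |s| (abs_nonneg s)).congr fun p => ?_)
        simp only [hF]
        rw [abs_mul, abs_mul, abs_mul, abs_pow, abs_of_nonneg (hwnn p.1),
          abs_of_nonneg (hφMnn _ _), abs_of_nonneg (hprodnn _)]
    -- combine
    have hFsum : HasSum (F t) (W (compUpTo f (M + 1) t)) := by
      have h1 := (hsum t).hasSum
      have h2 : HasSum (fun m => w m * (compUpTo f (M + 1) t) ^ m) (∑' p, F t p) :=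
        h1.prod_fiberwise (fib t)
      rwa [h2.unique (outer t)] at h1
    -- transfer along snoc equiv
    set e : ℕ × (Fin (M + 1) → ℕ) ≃ (Fin (M + 2) → ℕ) :=
      Fin.snocEquiv (fun _ : Fin (M + 2) => ℕ) with he
    refine e.hasSum_iff.mp ?_
    refine hFsum.congr_fun fun p => ?_
    obtain ⟨m, l'⟩ := p
    have hel : e (m, l') = Fin.snoc l' m := by
      rw [he]; funext i; simp [Fin.snocEquiv]
    simp only [Function.comp_apply, Function.comp, hel, hF]
    rw [extendTuple_snoc_last]
    rw [Finset.prod_range_succ]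
    rw [extendTuple_snoc_last, extendTuple_snoc_lt _ _ _ (Nat.lt_succ_self M),
      extendTuple_snoc_lt _ _ _ (Nat.succ_pos M)]
    have hpr : ∀ k ∈ Finset.range M,
        φ k (extendTuple (M + 2) (Fin.snoc l' m) (k + 1)) (extendTuple (M + 2) (Fin.snoc l' m) k)
        = φ k (extendTuple (M + 1) l' (k + 1)) (extendTuple (M + 1) l' k) := by
      intro k hk
      have hk' : k < M := Finset.mem_range.mp hk
      rw [extendTuple_snoc_lt _ _ _ (Nat.succ_lt_succ hk'),
        extendTuple_snoc_lt _ _ _ (hk'.trans (Nat.lt_succ_self M))]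
    rw [Finset.prod_congr rfl hpr]
    ring

end Stmt0Aux

open Stmt0Aux in
/-- If `f₁, …, f_N` (here `f 0, …, f (N-1)`) are each equal on all of `ℝ` to
their Taylor series at `0` with strictly positive coefficients `a k m = f_k^{(m)}(0)/m!`, and
`φ k l m := (d^m/dt^m)|₀ (f_k)^l / m!`, then `g := f_{N-1} ∘ ⋯ ∘ f 0` is equal on `ℝ` to its
Taylor series at `0` with strictly positive coefficients, and for every `t`,
`g t = ∑_{l : Fin N → ℕ} (f_{N-1}-coefficient at l_{N-1}) · φ_{N-2}(l_{N-1}, l_{N-2}) ⋯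
φ_0(l_1, l_0) · t^{l_0}`, the multiple series converging absolutely (in `ℝ`, `HasSum` over a
countable type is unconditional, hence absolute, convergence). -/
theorem stmt_0 (N : ℕ) (hN : 1 ≤ N) (f : ℕ → ℝ → ℝ) (a : ℕ → ℕ → ℝ)
    (ha : ∀ k < N, ∀ m : ℕ, 0 < a k m)
    (hf : ∀ k < N, ∀ x : ℝ, HasSum (fun m : ℕ => a k m * x ^ m) (f k x))
    (φ : ℕ → ℕ → ℕ → ℝ)
    (hφ : ∀ k l m : ℕ, φ k l m = iteratedDeriv m (fun t => (f k t) ^ l) 0 / (Nat.factorial m)) :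
    ∃ c : ℕ → ℝ,
      (∀ m : ℕ, 0 < c m) ∧
      (∀ t : ℝ, HasSum (fun m : ℕ => c m * t ^ m) (compUpTo f N t)) ∧
      (∀ t : ℝ, HasSum
        (fun l : Fin N → ℕ =>
          a (N - 1) (extendTuple N l (N - 1)) *
            (∏ k ∈ Finset.range (N - 1), φ k (extendTuple N l (k + 1)) (extendTuple N l k)) *
            t ^ (extendTuple N l 0))
        (compUpTo f N t)) := by
  obtain ⟨M, rfl⟩ : ∃ M, N = M + 1 := ⟨N - 1, (Nat.succ_pred_eq_of_pos hN).symm⟩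
  have hφ' : ∀ k < M + 1, ∀ l m : ℕ, φ k l m = powCoeff (a k) l m := by
    intro k hk l m
    have hps := powCoeff_hasSum (hf k hk) l
    have htc := taylorCoeff (F := fun t => (f k t) ^ l)
      (c := fun m => powCoeff (a k) l m) hps m
    rw [hφ k l m, htc, mul_comm, mul_div_assoc,
      div_self (Nat.cast_ne_zero.mpr (Nat.factorial_ne_zero m)), mul_one]
  have hcomp : ∀ n : ℕ, n ≤ M + 1 → 1 ≤ n → ∃ c : ℕ → ℝ, (∀ m, 0 < c m) ∧
      ∀ t : ℝ, HasSum (fun m => c m * t ^ m) (compUpTo f n t) := by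
    intro n
    induction n with
    | zero => intro _ h; omega
    | succ n ihn =>
      intro hn _
      rcases Nat.eq_zero_or_pos n with rfl | hpos
      · exact ⟨a 0, fun m => ha 0 (by omega) m, fun t => hf 0 (by omega) t⟩
      · obtain ⟨c, hcpos, hcsum⟩ := ihn (by omega) hpos
        obtain ⟨C, hCpos, hCsum⟩ := compCoeff (hf n (by omega)) (ha n (by omega)) hcsum hcpos
        exact ⟨C, hCpos, fun t => hCsum t⟩
  obtain ⟨c, hcpos, hcsum⟩ := hcomp (M + 1) le_rfl (by omega)
  refine ⟨c, hcpos, hcsum, fun t => ?_⟩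
  have hms := multiSum f a φ M
    (fun k hk => ha k (hk.trans (Nat.lt_succ_self M)))
    (fun k hk => hf k (hk.trans (Nat.lt_succ_self M)))
    (fun k hk => hφ' k (hk.trans (Nat.lt_succ_self M)))
    (a M) (f M) (fun m => (ha M (Nat.lt_succ_self M) m).le) (hf M (Nat.lt_succ_self M)) t
  simpa [compUpTo] using hms
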